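/- Let φ be a Drinfeld A-module over O_L of rank d, where L is a finite extension of K, let 𝒫 be a maximal ideal of O_L, and let 𝔭 = ker(A → O_L → O_L/𝒫) be the special characteristic. Let I be an ideal of A prime to 𝔭. Then: (1) the set Tor_φ(𝒫) = {x ∈ 𝒫 : φ_a(x) = 0 for some nonzero a ∈ A} has no nontrivial I-torsion; and (2) the reduction map red_𝒫 restricts to an injection on I-torsion, φ(O_L)[I] ↪ φ^𝒫(O_L/𝒫)[I]. -/

import Mathlib

noncomputable section

open scoped Classical

/-- Twisted multiplication of `τ`-coefficient sequences relative to `q`: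
`(u ⋆ v) n = ∑_{i+j=n} uᵢ · (vⱼ)^(q^i)`.  This is the coefficientwise description of
multiplication in the twisted polynomial ring `L{τ}` with `τ u = u^q τ`. -/
def tmul (q : ℕ) {L : Type*} [CommRing L] (u v : ℕ → L) : ℕ → L :=
  fun n => ∑ p ∈ Finset.HasAntidiagonal.antidiagonal n, u p.1 * v p.2 ^ q ^ p.1

/-- A Drinfeld `𝔽_q[t]`-module over a commutative ring `L`, described by the
`τ`-coefficients `coeff a : ℕ → L` of the twisted polynomials `φ_a ∈ L{τ}`.
The axioms say that `a ↦ φ_a` is an `𝔽_q`-algebra homomorphism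
`𝔽_q[t] → L{τ}` (constants are mapped to constants) which is not the
composition of the structure morphism `ι = coeff · 0` with `τ⁰`. -/
structure DrinfeldModule (Fq : Type*) [Field Fq] [Fintype Fq]
    (L : Type*) [CommRing L] where
  coeff : Polynomial Fq → ℕ → L
  support_finite : ∀ a, (Function.support (coeff a)).Finite
  coeff_add : ∀ a b n, coeff (a + b) n = coeff a n + coeff b n
  coeff_mul : ∀ a b, coeff (a * b) = tmul (Fintype.card Fq) (coeff a) (coeff b)
  coeff_one : ∀ n, coeff 1 n = if n = 0 then 1 else 0
  coeff_const : ∀ (c : Fq) (n : ℕ), n ≠ 0 → coeff (Polynomial.C c) n = 0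
  nonconst : ∃ (a : Polynomial Fq) (n : ℕ), 0 < n ∧ coeff a n ≠ 0

namespace DrinfeldModule

variable {Fq : Type*} [Field Fq] [Fintype Fq] {L M : Type*} [CommRing L] [CommRing M]

/-- `φ.eval a x = φ_a(x)`: the `A = 𝔽_q[t]`-module action on `L` given by `φ`. -/
def eval (φ : DrinfeldModule Fq L) (a : Polynomial Fq) (x : L) : L :=
  ∑ᶠ n, φ.coeff a n * x ^ (Fintype.card Fq) ^ n

/-- Evaluation of `φ_a` at a point of an `L`-algebra `M`, after mapping the
coefficients along a ring homomorphism `f : L →+* M`. -/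
def evalMap (φ : DrinfeldModule Fq L) (f : L →+* M) (a : Polynomial Fq) (x : M) : M :=
  ∑ᶠ n, f (φ.coeff a n) * x ^ (Fintype.card Fq) ^ n

/-- The structure morphism `ι : A → L`, `ι(a) = ∂φ_a` (constant coefficient). -/
def iota (φ : DrinfeldModule Fq L) (a : Polynomial Fq) : L := φ.coeff a 0

/-- `φ` has generic (zero) characteristic: the structure morphism `ι` is injective. -/
def GenericChar (φ : DrinfeldModule Fq L) : Prop := Function.Injective φ.iota

/-- `φ` has rank `d`: `deg_τ φ_a = d · deg a` for all nonzero `a`. -/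
def HasRank (φ : DrinfeldModule Fq L) (d : ℕ) : Prop :=
  ∀ a : Polynomial Fq, a ≠ 0 →
    φ.coeff a (d * a.natDegree) ≠ 0 ∧ ∀ n, d * a.natDegree < n → φ.coeff a n = 0

/-- `u` is a morphism of Drinfeld modules `φ → ψ` with coefficients in `M`
(after mapping the coefficients of `φ, ψ` along `f : L →+* M`), i.e. a twisted
polynomial `u ∈ M{τ}` with `u φ_a = ψ_a u` for all `a ∈ A`. -/
def IsMorphism (φ ψ : DrinfeldModule Fq L) (f : L →+* M) (u : ℕ → M) : Prop :=
  (Function.support u).Finite ∧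
    ∀ a, tmul (Fintype.card Fq) u (fun n => f (φ.coeff a n)) =
      tmul (Fintype.card Fq) (fun n => f (ψ.coeff a n)) u

/-- `φ` and `ψ` are isogenous over `M` (i.e. there is a nonzero morphism `φ → ψ`
with coefficients in `M`). -/
def IsogenousOver (φ ψ : DrinfeldModule Fq L) (f : L →+* M) : Prop :=
  ∃ u : ℕ → M, u ≠ 0 ∧ IsMorphism φ ψ f u

/-- `End_S(φ) = A`: every endomorphism of `φ` with coefficients in `S ⊆ M`
is of the form `φ_b` for some `b ∈ A`. -/
def EndTrivialOn (φ : DrinfeldModule Fq L) (f : L →+* M) (S : Set M) : Prop :=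
  ∀ u : ℕ → M, (∀ n, u n ∈ S) → IsMorphism φ φ f u →
    ∃ b : Polynomial Fq, u = fun n => f (φ.coeff b n)

/-- A family of points is linearly independent over `A = 𝔽_q[t]`. -/
def LinIndep (φ : DrinfeldModule Fq L) {m : ℕ} (x : Fin m → L) : Prop :=
  ∀ c : Fin m → Polynomial Fq, ∑ j, φ.eval (c j) (x j) = 0 → ∀ j, c j = 0

/-- `y` lies in the `A`-submodule generated by the points `g 0, …, g (m-1)`. -/
def InSpan (φ : DrinfeldModule Fq L) {m : ℕ} (g : Fin m → L) (y : L) : Prop :=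
  ∃ c : Fin m → Polynomial Fq, y = ∑ j, φ.eval (c j) (g j)

/-- `x` is a torsion point of `φ`. -/
def IsTorsion (φ : DrinfeldModule Fq L) (x : L) : Prop :=
  ∃ a : Polynomial Fq, a ≠ 0 ∧ φ.eval a x = 0

end DrinfeldModule

/-- The action of `a ∈ A` on the Mordell–Weil group
`φ̂(R) = φ₁(R)^{e₁} × … × φ_t(R)^{e_t}` of the `t`-module
`φ̂ = φ₁^{e₁} × … × φ_t^{e_t}`. -/
def tact {Fq : Type*} [Field Fq] [Fintype Fq] {R : Type*} [CommRing R]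
    {t : ℕ} {e : Fin t → ℕ} (φ : Fin t → DrinfeldModule Fq R) (a : Polynomial Fq)
    (x : (i : Fin t) → Fin (e i) → R) : (i : Fin t) → Fin (e i) → R :=
  fun i j => (φ i).eval a (x i j)

/-- `Λ` is an `A`-submodule of the Mordell–Weil group of the `t`-module
`φ₁^{e₁} × … × φ_t^{e_t}`. -/
def IsTSubmodule {Fq : Type*} [Field Fq] [Fintype Fq] {R : Type*} [CommRing R]
    {t : ℕ} {e : Fin t → ℕ} (φ : Fin t → DrinfeldModule Fq R)
    (Λ : Set ((i : Fin t) → Fin (e i) → R)) : Prop :=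
  (0 ∈ Λ) ∧ (∀ x ∈ Λ, ∀ y ∈ Λ, x + y ∈ Λ) ∧ ∀ a : Polynomial Fq, ∀ x ∈ Λ, tact φ a x ∈ Λ

/-- The Dirichlet series `∑_{𝔭 ∈ S maximal} (#(R/𝔭))^{-s}` over a set of ideals of `R`. -/
noncomputable def dirichletSum (R : Type*) [CommRing R] (S : Set (Ideal R)) (s : ℝ) : ℝ :=
  ∑' W : {W : Ideal R // W ∈ S ∧ W.IsMaximal}, (Nat.card (R ⧸ (W.1 : Ideal R)) : ℝ) ^ (-s)

/-- A set of (maximal) ideals of `R` has positive Dirichlet density `δ > 0`. -/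
def HasPositiveDensity (R : Type*) [CommRing R] (S : Set (Ideal R)) : Prop :=
  ∃ δ : ℝ, 0 < δ ∧ Filter.Tendsto
    (fun s : ℝ => dirichletSum R S s / dirichletSum R Set.univ s)
    (nhdsWithin 1 (Set.Ioi 1)) (nhds δ)

end

section Aux

variable {Fq : Type*} [Field Fq] [Fintype Fq] {L : Type*} [CommRing L]

private lemma dm_supp (φ : DrinfeldModule Fq L) (a : Polynomial Fq) (x : L) :
    (Function.support fun n => φ.coeff a n * x ^ (Fintype.card Fq) ^ n).Finite :=
  (φ.support_finite a).subset fun n hn => by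
    simp only [Function.mem_support] at hn ⊢
    exact fun h => hn (by rw [h, zero_mul])

private lemma dm_eval_add (φ : DrinfeldModule Fq L) (a b : Polynomial Fq) (x : L) :
    φ.eval (a + b) x = φ.eval a x + φ.eval b x := by
  unfold DrinfeldModule.eval
  rw [← finsum_add_distrib (dm_supp φ a x) (dm_supp φ b x)]
  congr 1; funext n
  rw [φ.coeff_add, add_mul]

private lemma dm_eval_one (φ : DrinfeldModule Fq L) (x : L) : φ.eval 1 x = x := by
  unfold DrinfeldModule.eval
  rw [finsum_eq_single _ 0 (fun n hn => by rw [φ.coeff_one]; simp [hn])]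
  rw [φ.coeff_one]; simp

private lemma dm_eval_sub (φ : DrinfeldModule Fq L) {p : ℕ} [Fact p.Prime] [CharP L p]
    {m : ℕ} (hm : Fintype.card Fq = p ^ m) (a : Polynomial Fq) (x y : L) :
    φ.eval a (x - y) = φ.eval a x - φ.eval a y := by
  unfold DrinfeldModule.eval
  rw [← finsum_sub_distrib (dm_supp φ a x) (dm_supp φ a y)]
  congr 1; funext n
  have hpow : (x - y) ^ (Fintype.card Fq) ^ n
      = x ^ (Fintype.card Fq) ^ n - y ^ (Fintype.card Fq) ^ n := by
    rw [hm, ← pow_mul p m n, sub_pow_char_pow]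
  rw [hpow, mul_sub]

end Aux

set_option maxHeartbeats 1000000
set_option synthInstance.maxHeartbeats 400000

/-- **Proposition (injectivity of reduction on prime-to-characteristic torsion).**
Let `φ` be a Drinfeld module over `O_L` of rank `d` (`L` a finite extension of
`𝔽_q(t)`), `Pid` a maximal ideal of `O_L`, `𝔭 = ker(A → O_L/Pid)` the special
characteristic, and `I` an ideal of `A` prime to `𝔭`.  Then
(1) the set `Tor_φ(Pid)` of torsion points lying in `Pid` has no nontrivial
`I`-torsion, and
(2) the reduction map is injective on `I`-torsion:
`φ(O_L)[I] ↪ φ^{Pid}(O_L/Pid)[I]`. -/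
theorem reduction_injective_on_prime_to_char_torsion
    (Fq : Type*) [Field Fq] [Fintype Fq]
    (L : Type*) [Field L] [Algebra (Polynomial Fq) L]
    [IsFractionRing ↥(integralClosure (Polynomial Fq) L) L]
    [Module.Finite (Polynomial Fq) ↥(integralClosure (Polynomial Fq) L)]
    (d : ℕ)
    (φ : DrinfeldModule Fq ↥(integralClosure (Polynomial Fq) L))
    (hι : ∀ a, φ.coeff a 0 =
      algebraMap (Polynomial Fq) ↥(integralClosure (Polynomial Fq) L) a)
    (hrank : φ.HasRank d)
    -- the maximal ideal `Pid` of `O_L`, with special characteristic `𝔭`: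
    (Pid : Ideal ↥(integralClosure (Polynomial Fq) L)) (hPid : Pid.IsMaximal)
    -- the ideal `I` of `A`, prime to the special characteristic
    -- `𝔭 = ker(A → O_L → O_L/Pid)`:
    (I : Ideal (Polynomial Fq))
    (hcop : I ⊔ Ideal.comap
      (algebraMap (Polynomial Fq) ↥(integralClosure (Polynomial Fq) L)) Pid = ⊤) :
    -- (1)  `Tor_φ(Pid)` has no nontrivial `I`-torsion:
    (∀ x : ↥(integralClosure (Polynomial Fq) L), x ∈ Pid →
      (∃ a : Polynomial Fq, a ≠ 0 ∧ φ.eval a x = 0) →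
      (∀ a ∈ I, φ.eval a x = 0) → x = 0) ∧
    -- (2)  reduction mod `Pid` is injective on `I`-torsion:
    (∀ x y : ↥(integralClosure (Polynomial Fq) L),
      (∀ a ∈ I, φ.eval a x = 0) → (∀ a ∈ I, φ.eval a y = 0) →
      x - y ∈ Pid → x = y) := by
  set O := ↥(integralClosure (Polynomial Fq) L) with hO
  -- `O` is a Noetherian domain
  haveI : IsNoetherianRing O := isNoetherianRing_iff.mpr
    (isNoetherian_of_tower (Polynomial Fq)
      (isNoetherian_of_isNoetherianRing_of_finite (Polynomial Fq) O))
  -- characteristic `p` of everything in sight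
  set p := ringChar Fq with hp
  haveI hpF : Fact p.Prime := ⟨CharP.char_is_prime Fq p⟩
  have hcard : ∃ m : ℕ, Fintype.card Fq = p ^ m := by
    obtain ⟨m, _, hm⟩ := FiniteField.card Fq p
    exact ⟨m, hm⟩
  obtain ⟨m, hm⟩ := hcard
  haveI : CharP O p := by
    have hinj : Function.Injective
        ((algebraMap (Polynomial Fq) O).comp (Polynomial.C : Fq →+* Polynomial Fq)) :=
      RingHom.injective _
    exact charP_of_injective_ringHom hinj p
  have hq2 : 2 ≤ Fintype.card Fq := Fintype.one_lt_card
  -- decompose `1 = b + c` with `b ∈ I`, `c ∈ 𝔭`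
  have h1 : (1 : Polynomial Fq) ∈ I ⊔ Ideal.comap (algebraMap (Polynomial Fq) O) Pid := by
    rw [hcop]; exact Submodule.mem_top
  obtain ⟨b, hb, c, hc, hbc⟩ := Submodule.mem_sup.mp h1
  have hc0 : φ.coeff c 0 ∈ Pid := by
    rw [hι c]; exact Ideal.mem_comap.mp hc
  -- Part (1), without the (unneeded) torsion hypothesis:
  have key : ∀ x : O, x ∈ Pid → (∀ a ∈ I, φ.eval a x = 0) → x = 0 := by
    intro x hxP hxI
    have hx_eq : x = φ.eval c x := by
      have h := dm_eval_add φ b c x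
      rw [hbc, dm_eval_one, hxI b hb, zero_add] at h
      exact h
    have step : ∀ k, 1 ≤ k → x ∈ Pid ^ k → x ∈ Pid ^ (k + 1) := by
      intro k hk hxk
      rw [hx_eq]
      show φ.eval c x ∈ Pid ^ (k + 1)
      unfold DrinfeldModule.eval
      rw [finsum_eq_sum _ (dm_supp φ c x)]
      apply Ideal.sum_mem
      intro n _
      rcases Nat.eq_zero_or_pos n with h0 | h1
      · subst h0
        simp only [pow_zero, pow_one]
        rw [pow_succ']
        exact Ideal.mul_mem_mul hc0 hxk
      · apply Ideal.mul_mem_left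
        have hmem : x ^ (Fintype.card Fq) ^ n ∈ Pid ^ (k * (Fintype.card Fq) ^ n) := by
          have := Ideal.pow_mem_pow hxk ((Fintype.card Fq) ^ n)
          rwa [← pow_mul] at this
        refine Ideal.pow_le_pow_right ?_ hmem
        calc k + 1 ≤ k * 2 := by omega
          _ ≤ k * (Fintype.card Fq) ^ n :=
            Nat.mul_le_mul_left k (le_trans hq2 (Nat.le_self_pow h1.ne' _))
    have hall : ∀ k, x ∈ Pid ^ (k + 1) := by
      intro k
      induction k with
      | zero => simpa using hxP
      | succ k ih => exact step (k + 1) (Nat.succ_le_succ (Nat.zero_le _)) ih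
    have hbot : (⨅ i : ℕ, Pid ^ i) = ⊥ :=
      Ideal.iInf_pow_eq_bot_of_isDomain Pid hPid.ne_top
    have hx : x ∈ (⨅ i : ℕ, Pid ^ i) := by
      refine Submodule.mem_iInf _ |>.mpr fun i => ?_
      cases i with
      | zero => simp
      | succ i => exact hall i
    rw [hbot] at hx
    simpa using hx
  refine ⟨fun x hxP _ hxI => key x hxP hxI, fun x y hxI hyI hxy => ?_⟩
  have hsub : ∀ a ∈ I, φ.eval a (x - y) = 0 := fun a ha => by
    rw [dm_eval_sub φ hm a x y, hxI a ha, hyI a ha, sub_zero]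
  have := key (x - y) hxy hsub
  exact sub_eq_zero.mp this
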